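/- There exists a super-lacunary increasing sequence q of positive integers (q_{n+1}/q_n → ∞) with G₂(q) = {0}. -/

import Mathlib

open Filter

/-- `G₂(q)` inside the circle `ℝ/ℤ`; the norm on `AddCircle (1:ℝ)` is the
distance to the nearest integer. -/
noncomputable def G2 (q : ℕ → ℕ) : Set (AddCircle (1:ℝ)) :=
  {t | Summable (fun n => ‖q n • t‖ ^ 2)}

private def aa (n : ℕ) : ℕ := Nat.sqrt n + 1

private def qq : ℕ → ℕ
  | 0 => 1
  | n + 1 => aa n * qq n + 1

private lemma qq_pos (n : ℕ) : 0 < qq n := by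
  cases n with
  | zero => simp [qq]
  | succ n => simp [qq]

private lemma aa_sq_le (n : ℕ) : (aa n) ^ 2 ≤ 4 * (n + 1) := by
  simp only [aa]
  nlinarith [Nat.sqrt_le' n, Nat.sqrt_le_self n]

private lemma sqrt_tendsto : Tendsto (fun n => Nat.sqrt n) atTop atTop := by
  refine tendsto_atTop.2 fun b => eventually_atTop.2 ⟨b * b, fun n hn => ?_⟩
  exact Nat.le_sqrt.2 hn

/-- There is a super-lacunary increasing sequence `q` of positive integers
(`qₙ₊₁/qₙ → ∞`) with `G₂(q) = {0}`. -/
theorem stmt12 :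
    ∃ q : ℕ → ℕ, StrictMono q ∧ (∀ n, 0 < q n) ∧
      Tendsto (fun n => (q (n + 1) : ℝ) / (q n : ℝ)) atTop atTop ∧
      G2 q = {0} := by
  refine ⟨qq, ?_, qq_pos, ?_, ?_⟩
  · refine strictMono_nat_of_lt_succ fun n => ?_
    have h := qq_pos n
    calc qq n = 1 * qq n := (one_mul _).symm
    _ ≤ aa n * qq n := Nat.mul_le_mul_right _ (Nat.succ_le_succ (Nat.zero_le _))
    _ < aa n * qq n + 1 := Nat.lt_succ_self _
  · -- ratio tendsto
    have hle : ∀ n, (aa n : ℝ) ≤ (qq (n+1) : ℝ) / (qq n : ℝ) := by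
      intro n
      have hq : (0:ℝ) < qq n := by exact_mod_cast qq_pos n
      rw [le_div_iff₀ hq]
      have : (aa n * qq n : ℕ) ≤ qq (n+1) := by simp [qq]
      exact_mod_cast this
    refine tendsto_atTop_mono hle ?_
    have h2 : Tendsto aa atTop atTop := by
      refine tendsto_atTop.2 fun b => eventually_atTop.2 ⟨b * b, fun n hn => ?_⟩
      exact le_trans (Nat.le_sqrt.2 hn) (Nat.le_succ _)
    exact tendsto_natCast_atTop_atTop.comp h2
  · ext t
    simp only [G2, Set.mem_setOf_eq, Set.mem_singleton_iff]
    constructor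
    · intro hsum
      by_contra ht
      have htpos : 0 < ‖t‖ := norm_pos_iff.2 ht
      set ε : ℕ → ℝ := fun n => ‖qq n • t‖ with hε
      have hεnn : ∀ n, 0 ≤ ε n := fun n => norm_nonneg _
      have key : ∀ n, ‖t‖ ≤ ε (n+1) + (aa n : ℝ) * ε n := by
        intro n
        have hdecomp : (qq (n+1)) • t = aa n • (qq n • t) + t := by
          show (aa n * qq n + 1) • t = _
          rw [add_smul, one_smul, mul_smul]
        have : t = qq (n+1) • t - aa n • (qq n • t) := by
          rw [hdecomp]; abel
        calc ‖t‖ = ‖qq (n+1) • t - aa n • (qq n • t)‖ := by rw [← this]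
        _ ≤ ‖qq (n+1) • t‖ + ‖aa n • (qq n • t)‖ := norm_sub_le _ _
        _ ≤ ε (n+1) + (aa n : ℝ) * ε n := by
            exact add_le_add le_rfl norm_nsmul_le
      -- ε tends to 0
      have hsq0 : Tendsto (fun n => ε n ^ 2) atTop (nhds 0) := hsum.tendsto_atTop_zero
      have hε0 : Tendsto ε atTop (nhds 0) := by
        have : Tendsto (fun n => Real.sqrt (ε n ^ 2)) atTop (nhds 0) := by
          simpa [Function.comp_def] using (Real.continuous_sqrt.tendsto 0).comp hsq0
        simpa [Real.sqrt_sq (hεnn _)] using this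
      obtain ⟨N, hN⟩ := (Metric.tendsto_atTop.1 hε0 (‖t‖ / 2) (by positivity))
      have hNlb : ∀ n ≥ N, ‖t‖ / 2 ≤ (aa n : ℝ) * ε n := by
        intro n hn
        have h1 := key n
        have h2 : ε (n+1) < ‖t‖ / 2 := by
          have := hN (n+1) (by omega)
          rwa [Real.dist_eq, sub_zero, abs_of_nonneg (hεnn _)] at this
        linarith
      -- squared lower bound
      have hlb : ∀ n, ‖t‖ ^ 2 / (16 * ((n + N : ℕ) + 1)) ≤ ε (n + N) ^ 2 := by
        intro n
        have hn : n + N ≥ N := Nat.le_add_left _ _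
        have h1 := hNlb (n + N) hn
        have ha : (0:ℝ) < (aa (n+N) : ℝ) := by
          have : 0 < aa (n+N) := Nat.succ_pos _
          exact_mod_cast this
        have h2 : ‖t‖ / (2 * (aa (n+N) : ℝ)) ≤ ε (n + N) := by
          rw [div_le_iff₀ (by positivity)]
          calc ‖t‖ ≤ 2 * ((aa (n+N) : ℝ) * ε (n+N)) := by linarith
          _ = ε (n+N) * (2 * (aa (n+N))) := by ring
        have h3 : ‖t‖ ^ 2 / (2 * (aa (n+N) : ℝ)) ^ 2 ≤ ε (n + N) ^ 2 := by
          rw [← div_pow]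
          exact pow_le_pow_left₀ (by positivity) h2 2
        refine le_trans ?_ h3
        apply div_le_div_of_nonneg_left (by positivity) (by positivity)
        have h4 : ((aa (n+N)) ^ 2 : ℝ) ≤ 4 * ((n + N : ℕ) + 1) := by
          exact_mod_cast aa_sq_le (n + N)
        nlinarith [h4]
      -- derive summability of harmonic-like series
      have hsum' : Summable (fun n => ε (n + N) ^ 2) :=
        (summable_nat_add_iff (f := fun n => ε n ^ 2) N).2 hsum
      have hsumg : Summable (fun n : ℕ => ‖t‖ ^ 2 / (16 * (((n + N : ℕ) : ℝ) + 1))) :=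
        Summable.of_nonneg_of_le (fun n => by positivity) hlb hsum'
      have hc : (‖t‖ ^ 2 / 16) ≠ 0 := by positivity
      have hsumh : Summable (fun n : ℕ => 1 / (((n + N : ℕ) : ℝ) + 1)) := by
        exact (summable_mul_left_iff hc).1 (hsumg.congr fun n => by field_simp)
      have hsumh2 : Summable (fun m : ℕ => 1 / ((m : ℝ) + 1)) :=
        (summable_nat_add_iff (f := fun m : ℕ => 1 / ((m : ℝ) + 1)) N).1 hsumh
      have hsumh3 : Summable (fun m : ℕ => 1 / (m : ℝ)) := by
        refine (summable_nat_add_iff (f := fun m : ℕ => 1 / (m : ℝ)) 1).1 ?_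
        exact hsumh2.congr fun m => by push_cast; ring
      exact Real.not_summable_one_div_natCast hsumh3
    · intro h
      subst h
      refine (summable_zero).congr fun n => ?_
      simp
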